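/- Let n ≥ 1 and let X ⊆ Y_1 × ⋯ × Y_{n+1} be a Sternfeld-type embedding of a compact metrizable space X with respect to a decomposition X = A_1 ∪ ⋯ ∪ A_{n+1} into zero-dimensional subsets, with induced transformation L. Let Z' be a finite subset of Z and set X' = { x ∈ X : x ∈ A_i and p_i(x) ∈ Z' ∩ Y_i for some i }. Then for every continuous f : X → ℝ vanishing at every point of X' and every real c with ‖f‖ < c, there exists a continuous g : Z → ℝ such that g vanishes at every point of Z', the function f − L(g) vanishes at every point of X', ‖g‖ ≤ ‖f‖/(n+1), and ‖f − L(g)‖ < (n/(n+1))·c. -/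

import Mathlib

open Topology

/-- The topology of pointwise convergence on `C(T, ℝ)`: the topology induced from the
product topology on `ℝ^T` via the canonical injection. -/
def cpTop (T : Type*) [TopologicalSpace T] : TopologicalSpace C(T, ℝ) :=
  TopologicalSpace.induced (fun f => (f : T → ℝ)) Pi.topologicalSpace

/-- A subset `A` of a topological space is zero-dimensional if the subspace `A` has a
topological base consisting of sets clopen in `A`. -/
def ZeroDimSubset {X : Type*} [TopologicalSpace X] (A : Set X) : Prop :=
  ∀ (a : A) (U : Set A), IsOpen U → a ∈ U → ∃ V : Set A, IsClopen V ∧ a ∈ V ∧ V ⊆ U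

/-- The transformation induced by an embedding `X ⊆ Y₁ × ⋯ × Y_k`:
`L g x = g y₁ + ⋯ + g y_k`, where `(y₁, …, y_k)` are the coordinates of `x`, each `yᵢ`
regarded as a point of the disjoint union `Z = Σ i, Y i`. -/
noncomputable def inducedL {ι : Type*} [Fintype ι] {Y : ι → Type*}
    [∀ i, TopologicalSpace (Y i)] (X : Set (Π i, Y i))
    (g : C((Σ i, Y i), ℝ)) : C(X, ℝ) where
  toFun x := ∑ i, g ⟨i, (x : Π i, Y i) i⟩
  continuous_toFun := by
    apply continuous_finset_sum
    intro i _
    exact g.continuous.comp (continuous_sigmaMk.comp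
      ((continuous_apply i).comp continuous_subtype_val))

/-- Given a finite subset `Z'` of `Z`, the set `X' ⊆ X` of points `x ∈ Aᵢ` whose `i`-th
coordinate lies in `Z' ∩ Yᵢ` for some `i`. -/
def sternfeldXPrime {n : ℕ} {Y : Fin (n + 1) → Type*} [∀ i, TopologicalSpace (Y i)]
    (X : Set (Π i, Y i)) (A : Fin (n + 1) → Set X)
    (Z' : Set (Σ i, Y i)) : Set X :=
  {x : X | ∃ i, x ∈ A i ∧ (⟨i, (x : Π j, Y j) i⟩ : Σ j, Y j) ∈ Z'}

section sternfeldAux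

variable {α : Type*} [TopologicalSpace α]

lemma sternfeld_foldSup_nonneg (l : List C(α, ℝ)) (y : α) :
    0 ≤ (l.foldr (· ⊔ ·) 0) y := by
  induction l with
  | nil => simp
  | cons h t ih =>
      simp only [List.foldr_cons, ContinuousMap.sup_apply]
      exact le_trans ih (le_max_right _ _)

lemma sternfeld_foldSup_le (l : List C(α, ℝ)) (y : α) {b : ℝ} (hb : 0 ≤ b)
    (hl : ∀ h ∈ l, h y ≤ b) : (l.foldr (· ⊔ ·) 0) y ≤ b := by
  induction l with
  | nil => simpa using hb
  | cons h t ih =>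
      simp only [List.foldr_cons, ContinuousMap.sup_apply]
      exact max_le (hl h (by simp)) (ih fun g hg => hl g (by simp [hg]))

lemma sternfeld_le_foldSup (l : List C(α, ℝ)) (y : α) {h : C(α, ℝ)} (hm : h ∈ l) :
    h y ≤ (l.foldr (· ⊔ ·) 0) y := by
  induction l with
  | nil => simp at hm
  | cons g t ih =>
      simp only [List.foldr_cons, ContinuousMap.sup_apply]
      rcases List.mem_cons.1 hm with rfl | hm
      · exact le_max_left _ _
      · exact le_trans (ih hm) (le_max_right _ _)

lemma sternfeld_foldInf_nonpos (l : List C(α, ℝ)) (y : α) :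
    (l.foldr (· ⊓ ·) 0) y ≤ 0 := by
  induction l with
  | nil => simp
  | cons h t ih =>
      simp only [List.foldr_cons, ContinuousMap.inf_apply]
      exact le_trans (min_le_right _ _) ih

lemma sternfeld_foldInf_ge (l : List C(α, ℝ)) (y : α) {b : ℝ} (hb : b ≤ 0)
    (hl : ∀ h ∈ l, b ≤ h y) : b ≤ (l.foldr (· ⊓ ·) 0) y := by
  induction l with
  | nil => simpa using hb
  | cons h t ih =>
      simp only [List.foldr_cons, ContinuousMap.inf_apply]
      exact le_min (hl h (by simp)) (ih fun g hg => hl g (by simp [hg]))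

lemma sternfeld_foldInf_le (l : List C(α, ℝ)) (y : α) {h : C(α, ℝ)} (hm : h ∈ l) :
    (l.foldr (· ⊓ ·) 0) y ≤ h y := by
  induction l with
  | nil => simp at hm
  | cons g t ih =>
      simp only [List.foldr_cons, ContinuousMap.inf_apply]
      rcases List.mem_cons.1 hm with rfl | hm
      · exact min_le_left _ _
      · exact le_trans (min_le_right _ _) (ih hm)

end sternfeldAux
theorem statement5 {n : ℕ} (hn : 1 ≤ n) {Y : Fin (n + 1) → Type*}
    [∀ i, TopologicalSpace (Y i)] [∀ i, CompactSpace (Y i)]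
    [∀ i, TopologicalSpace.MetrizableSpace (Y i)]
    (X : Set (Π i, Y i)) [CompactSpace X]
    (A : Fin (n + 1) → Set X) (hA : ∀ i, ZeroDimSubset (A i))
    (hcover : ⋃ i, A i = Set.univ)
    (hfiber : ∀ i, ∀ x ∈ A i, ∀ x' : X, (x' : Π j, Y j) i = (x : Π j, Y j) i → x' = x)
    (Z' : Set (Σ i, Y i)) (hZ' : Z'.Finite) :
    ∀ (f : C(X, ℝ)), (∀ x ∈ sternfeldXPrime X A Z', f x = 0) →
      ∀ c : ℝ, ‖f‖ < c →
        ∃ g : C((Σ i, Y i), ℝ),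
          (∀ z ∈ Z', g z = 0) ∧
          (∀ x ∈ sternfeldXPrime X A Z', f x - inducedL X g x = 0) ∧
          ‖g‖ ≤ ‖f‖ / (n + 1) ∧ ‖f - inducedL X g‖ < ((n : ℝ) / (n + 1)) * c := by
  classical
  intro f hf' c hfc
  -- basic numerical facts
  have hn1 : (1 : ℝ) ≤ (n : ℝ) := by exact_mod_cast hn
  have hnpos : (0 : ℝ) < (n : ℝ) := by linarith
  have hMnn : (0 : ℝ) ≤ ‖f‖ := norm_nonneg f
  have hc : (0 : ℝ) < c := lt_of_le_of_lt hMnn hfc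
  set a : ℝ := ((n : ℝ) + 1)⁻¹ with hadef
  have hapos : (0 : ℝ) < a := by rw [hadef]; positivity
  have ha1 : ((n : ℝ) + 1) * a = 1 := by rw [hadef]; field_simp
  set ε : ℝ := min ((n : ℝ) * (c - ‖f‖)) ((n : ℝ) * c * a) / 4 with hεdef
  have hεpos : (0 : ℝ) < ε := by
    rw [hεdef]
    apply div_pos _ (by norm_num)
    exact lt_min (by nlinarith) (by positivity)
  have hε1 : 4 * ε ≤ (n : ℝ) * (c - ‖f‖) := by
    rw [hεdef]; have := min_le_left ((n : ℝ) * (c - ‖f‖)) ((n : ℝ) * c * a); linarith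
  have hε2 : 4 * ε ≤ (n : ℝ) * c * a := by
    rw [hεdef]; have := min_le_right ((n : ℝ) * (c - ‖f‖)) ((n : ℝ) * c * a); linarith
  have hfbd : ∀ x : X, |f x| ≤ ‖f‖ := fun x => by
    rw [← Real.norm_eq_abs]; exact f.norm_coe_le_norm x
  -- the coordinate projections
  have hpcont : ∀ i : Fin (n + 1), Continuous fun x : X => (x : Π j, Y j) i :=
    fun i => (continuous_apply i).comp continuous_subtype_val
  -- the "safe" open sets O i x
  have hOex : ∃ O : ∀ i : Fin (n + 1), X → Set (Y i),
      (∀ i x, IsOpen (O i x)) ∧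
      (∀ i x y, y ∈ O i x → (⟨i, y⟩ : Σ j, Y j) ∉ Z') ∧
      (∀ i (x x'' : X), (x'' : Π j, Y j) i ∈ O i x →
        ((0 ≤ f x → f x - ε < f x'') ∧ (f x < 0 → f x'' < f x + ε))) ∧
      (∀ i x, 2 * ε ≤ |f x| → x ∈ A i → (x : Π j, Y j) i ∈ O i x) := by
    refine ⟨fun i x => ((fun x'' : X => (x'' : Π j, Y j) i) ''
        (if 0 ≤ f x then {x' : X | f x' ≤ f x - ε} else {x' : X | f x + ε ≤ f x'}) ∪
        Sigma.mk i ⁻¹' Z')ᶜ, ?_, ?_, ?_, ?_⟩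
    · intro i x
      have hBcl : IsClosed (if 0 ≤ f x then {x' : X | f x' ≤ f x - ε}
          else {x' : X | f x + ε ≤ f x'}) := by
        split
        · exact isClosed_le f.continuous continuous_const
        · exact isClosed_le continuous_const f.continuous
      have h1 : IsClosed ((fun x'' : X => (x'' : Π j, Y j) i) ''
          (if 0 ≤ f x then {x' : X | f x' ≤ f x - ε} else {x' : X | f x + ε ≤ f x'})) :=
        (hBcl.isCompact.image (hpcont i)).isClosed
      have h2 : IsClosed (Sigma.mk i ⁻¹' Z') :=
        (hZ'.preimage sigma_mk_injective.injOn).isClosed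
      exact (h1.union h2).isOpen_compl
    · intro i x y hy
      intro hz
      exact hy (Set.mem_union_right _ hz)
    · intro i x x'' hy
      have hnB : x'' ∉ (if 0 ≤ f x then {x' : X | f x' ≤ f x - ε}
          else {x' : X | f x + ε ≤ f x'}) := by
        intro hB
        exact hy (Set.mem_union_left _ ⟨x'', hB, rfl⟩)
      constructor
      · intro hx0
        rw [if_pos hx0] at hnB
        simp only [Set.mem_setOf_eq, not_le] at hnB
        exact hnB
      · intro hx0
        rw [if_neg (not_le.2 hx0)] at hnB
        simp only [Set.mem_setOf_eq, not_le] at hnB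
        exact hnB
    · intro i x hxK hxA
      intro hmem
      rcases hmem with hmem | hmem
      · obtain ⟨x', hx', hpe⟩ := hmem
        have hxx : x' = x := hfiber i x hxA x' hpe
        subst hxx
        revert hx'
        split
        · intro h; simp only [Set.mem_setOf_eq] at h; linarith
        · intro h; simp only [Set.mem_setOf_eq] at h; linarith
      · have hx' : x ∈ sternfeldXPrime X A Z' := ⟨i, hxA, hmem⟩
        have h0 := hf' x hx'
        rw [h0] at hxK
        simp only [abs_zero] at hxK
        linarith

  obtain ⟨O, hO1, hO2, hO3, hO4⟩ := hOex
  -- the compact set of points needing capture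
  set K : Set X := {x : X | 2 * ε ≤ |f x|} with hKdef
  have hKcomp : IsCompact K := by
    have : IsClosed K := isClosed_le continuous_const f.continuous.abs
    exact this.isCompact
  -- choose closed neighborhoods inside "capture-safe" open sets
  have hDex : ∀ k : ↥K, ∃ (i : Fin (n + 1)) (Dk : Set X), IsClosed Dk ∧ Dk ∈ 𝓝 (↑k : X) ∧
      ∀ x'' ∈ Dk, ((x'' : Π j, Y j) i ∈ O i ↑k ∧ |f x'' - f ↑k| < ε) := by
    intro k
    have hxU : (↑k : X) ∈ ⋃ i, A i := by rw [hcover]; trivial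
    obtain ⟨i, hAi⟩ := Set.mem_iUnion.1 hxU
    have hkK : 2 * ε ≤ |f ↑k| := k.2
    set U : Set X := ((fun x'' : X => (x'' : Π j, Y j) i) ⁻¹' O i ↑k) ∩
      {x'' : X | |f x'' - f ↑k| < ε} with hUdef
    have hUopen : IsOpen U := by
      apply IsOpen.inter ((hO1 i ↑k).preimage (hpcont i))
      have : Continuous fun x'' : X => |f x'' - f ↑k| :=
        (f.continuous.sub continuous_const).abs
      exact isOpen_lt this continuous_const
    have hxmem : (↑k : X) ∈ U := by
      refine ⟨hO4 i ↑k hkK hAi, ?_⟩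
      simp only [Set.mem_setOf_eq, sub_self, abs_zero]
      exact hεpos
    have hXmetr : TopologicalSpace.MetrizableSpace X := inferInstance
    obtain ⟨Dk, hDn, hDc, hDs⟩ := exists_mem_nhds_isClosed_subset (hUopen.mem_nhds hxmem)
    exact ⟨i, Dk, hDc, hDn, fun x'' hx'' => ⟨(hDs hx'').1, (hDs hx'').2⟩⟩

  choose idx D hDcl hDnh hDprop using hDex
  -- finite subcover
  have hTex : ∃ T : Finset ↥K, K ⊆ ⋃ k ∈ T, interior (D k) := by
    apply hKcomp.elim_finite_subcover (fun k : ↥K => interior (D k)) (fun _ => isOpen_interior)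
    intro x hx
    exact Set.mem_iUnion.2 ⟨⟨x, hx⟩, mem_interior_iff_mem_nhds.2 (hDnh ⟨x, hx⟩)⟩
  obtain ⟨T, hT⟩ := hTex
  -- Urysohn bumps
  have hφex : ∀ (i : Fin (n + 1)) (k : ↥K), ∃ φ : C(Y i, ℝ),
      (∀ y, 0 ≤ φ y ∧ φ y ≤ 1) ∧ (∀ y, φ y ≠ 0 → y ∈ O i ↑k) ∧
      (idx k = i → ∀ x'' ∈ D k, φ ((x'' : Π j, Y j) i) = 1) := by
    intro i k
    by_cases h : idx k = i
    · subst h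
      set i := idx k
      have hQcomp : IsCompact ((fun x'' : X => (x'' : Π j, Y j) i) '' D k) :=
        (hDcl k).isCompact.image (hpcont i)
      have hQcl : IsClosed ((fun x'' : X => (x'' : Π j, Y j) i) '' D k) := hQcomp.isClosed
      have hOc : IsClosed (O i ↑k)ᶜ := (hO1 i ↑k).isClosed_compl
      have hdisj : Disjoint ((O i ↑k)ᶜ) ((fun x'' : X => (x'' : Π j, Y j) i) '' D k) := by
        rw [Set.disjoint_left]
        rintro y hyc ⟨x'', hx'', rfl⟩
        exact hyc (hDprop k x'' hx'').1
      obtain ⟨ψ, h0, h1, h01⟩ := exists_continuous_zero_one_of_isClosed hOc hQcl hdisj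
      refine ⟨ψ, fun y => ⟨(h01 y).1, (h01 y).2⟩, ?_, ?_⟩
      · intro y hy
        by_contra hyO
        exact hy (h0 hyO)
      · intro _ x'' hx''
        exact h1 (Set.mem_image_of_mem _ hx'')
    · exact ⟨0, by simp, by simp, fun h' => absurd h' h⟩

  choose φ hφ01 hφO hφ1 using hφex
  -- the coordinate functions G i
  have hGex : ∀ i : Fin (n + 1), ∃ Gi : C(Y i, ℝ),
      (∀ x'' : X, Gi ((x'' : Π j, Y j) i) ≤ a * max 0 (f x'')) ∧
      (∀ x'' : X, a * min 0 (f x'') ≤ Gi ((x'' : Π j, Y j) i)) ∧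
      (∀ y, |Gi y| ≤ a * ‖f‖) ∧
      (∀ y, (⟨i, y⟩ : Σ j, Y j) ∈ Z' → Gi y = 0) ∧
      (∀ k ∈ T, idx k = i → ∀ x'' ∈ D k,
        (0 ≤ f ↑k → a * (f ↑k - ε) ≤ Gi ((x'' : Π j, Y j) i)) ∧
        (f ↑k < 0 → Gi ((x'' : Π j, Y j) i) ≤ a * (f ↑k + ε))) := by
    intro i
    set bP : ↥K → C(Y i, ℝ) := fun k =>
      if 0 ≤ f ↑k then (a * (f ↑k - ε)) • φ i k else 0 with hbPdef
    set bN : ↥K → C(Y i, ℝ) := fun k =>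
      if f ↑k < 0 then (a * (f ↑k + ε)) • φ i k else 0 with hbNdef
    have hfkpos : ∀ k : ↥K, 0 ≤ f ↑k → 2 * ε ≤ f ↑k := fun k h => by
      have h2 : 2 * ε ≤ |f ↑k| := k.2
      rwa [abs_of_nonneg h] at h2
    have hfkneg : ∀ k : ↥K, f ↑k < 0 → f ↑k ≤ -(2 * ε) := fun k h => by
      have h2 : 2 * ε ≤ |f ↑k| := k.2
      rw [abs_of_neg h] at h2; linarith
    have hfkM : ∀ k : ↥K, |f ↑k| ≤ ‖f‖ := fun k => hfbd ↑k
    have hbPval : ∀ (k : ↥K) (y : Y i),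
        bP k y = if 0 ≤ f ↑k then (a * (f ↑k - ε)) * φ i k y else 0 := by
      intro k y
      rw [hbPdef]
      by_cases h : 0 ≤ f ↑k <;> simp [h]
    have hbNval : ∀ (k : ↥K) (y : Y i),
        bN k y = if f ↑k < 0 then (a * (f ↑k + ε)) * φ i k y else 0 := by
      intro k y
      rw [hbNdef]
      by_cases h : f ↑k < 0 <;> simp [h]
    have hbPO : ∀ (k : ↥K) (y : Y i), bP k y ≠ 0 → (0 ≤ f ↑k ∧ y ∈ O i ↑k) := by
      intro k y h
      rw [hbPval] at h
      split at h
      · next hk =>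
          refine ⟨hk, hφO i k y ?_⟩
          intro h0
          rw [h0, mul_zero] at h
          exact h rfl
      · exact absurd rfl h
    have hbNO : ∀ (k : ↥K) (y : Y i), bN k y ≠ 0 → (f ↑k < 0 ∧ y ∈ O i ↑k) := by
      intro k y h
      rw [hbNval] at h
      split at h
      · next hk =>
          refine ⟨hk, hφO i k y ?_⟩
          intro h0
          rw [h0, mul_zero] at h
          exact h rfl
      · exact absurd rfl h
    refine ⟨(T.toList.map bP).foldr (· ⊔ ·) 0 + (T.toList.map bN).foldr (· ⊓ ·) 0,
      ?_, ?_, ?_, ?_, ?_⟩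
    · -- upper safety bound
      intro x''
      have hsup : ((T.toList.map bP).foldr (· ⊔ ·) 0) ((x'' : Π j, Y j) i)
          ≤ a * max 0 (f x'') := by
        apply sternfeld_foldSup_le _ _ (by positivity)
        intro h hm
        obtain ⟨k, hk, rfl⟩ := List.mem_map.1 hm
        by_cases h0 : bP k ((x'' : Π j, Y j) i) = 0
        · rw [h0]; positivity
        · obtain ⟨hk0, hyO⟩ := hbPO k _ h0
          have h3 := (hO3 i ↑k x'' hyO).1 hk0
          have hcoef : 0 ≤ a * (f ↑k - ε) :=
            mul_nonneg hapos.le (by have := hfkpos k hk0; linarith)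
          rw [hbPval, if_pos hk0]
          calc (a * (f ↑k - ε)) * φ i k ((x'' : Π j, Y j) i) ≤ (a * (f ↑k - ε)) * 1 :=
                mul_le_mul_of_nonneg_left (hφ01 i k _).2 hcoef
            _ = a * (f ↑k - ε) := mul_one _
            _ ≤ a * f x'' := mul_le_mul_of_nonneg_left (by linarith) hapos.le
            _ ≤ a * max 0 (f x'') := mul_le_mul_of_nonneg_left (le_max_right _ _) hapos.le
      have hinf := sternfeld_foldInf_nonpos (T.toList.map bN) ((x'' : Π j, Y j) i)
      simp only [ContinuousMap.add_apply]
      linarith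
    · -- lower safety bound
      intro x''
      have hinf : a * min 0 (f x'') ≤ ((T.toList.map bN).foldr (· ⊓ ·) 0) ((x'' : Π j, Y j) i) := by
        apply sternfeld_foldInf_ge _ _ (by
          have : min 0 (f x'') ≤ 0 := min_le_left _ _
          nlinarith)
        intro h hm
        obtain ⟨k, hk, rfl⟩ := List.mem_map.1 hm
        by_cases h0 : bN k ((x'' : Π j, Y j) i) = 0
        · rw [h0]
          have : min 0 (f x'') ≤ 0 := min_le_left _ _
          nlinarith
        · obtain ⟨hk0, hyO⟩ := hbNO k _ h0
          have h3 := (hO3 i ↑k x'' hyO).2 hk0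
          have hcoef : a * (f ↑k + ε) ≤ 0 :=
            mul_nonpos_of_nonneg_of_nonpos hapos.le (by have := hfkneg k hk0; linarith)
          rw [hbNval, if_pos hk0]
          calc a * min 0 (f x'') ≤ a * f x'' :=
                mul_le_mul_of_nonneg_left (min_le_right _ _) hapos.le
            _ ≤ a * (f ↑k + ε) := mul_le_mul_of_nonneg_left (by linarith) hapos.le
            _ = (a * (f ↑k + ε)) * 1 := (mul_one _).symm
            _ ≤ (a * (f ↑k + ε)) * φ i k ((x'' : Π j, Y j) i) :=
                mul_le_mul_of_nonpos_left (hφ01 i k _).2 hcoef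
      have hsup := sternfeld_foldSup_nonneg (T.toList.map bP) ((x'' : Π j, Y j) i)
      simp only [ContinuousMap.add_apply]
      linarith
    · -- global bound
      intro y
      have hsup1 : ((T.toList.map bP).foldr (· ⊔ ·) 0) y ≤ a * ‖f‖ := by
        apply sternfeld_foldSup_le _ _ (by positivity)
        intro h hm
        obtain ⟨k, hk, rfl⟩ := List.mem_map.1 hm
        rw [hbPval]
        split
        · next hk0 =>
            have hcoef : 0 ≤ a * (f ↑k - ε) :=
              mul_nonneg hapos.le (by have := hfkpos k hk0; linarith)
            have hfk : f ↑k ≤ ‖f‖ := le_trans (le_abs_self _) (hfkM k)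
            calc (a * (f ↑k - ε)) * φ i k y ≤ (a * (f ↑k - ε)) * 1 :=
                  mul_le_mul_of_nonneg_left (hφ01 i k _).2 hcoef
              _ = a * (f ↑k - ε) := mul_one _
              _ ≤ a * ‖f‖ := mul_le_mul_of_nonneg_left (by linarith) hapos.le
        · positivity
      have hsup0 := sternfeld_foldSup_nonneg (T.toList.map bP) y
      have hinf0 := sternfeld_foldInf_nonpos (T.toList.map bN) y
      have hinf1 : -(a * ‖f‖) ≤ ((T.toList.map bN).foldr (· ⊓ ·) 0) y := by
        apply sternfeld_foldInf_ge _ _ (by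
          have : (0:ℝ) ≤ a * ‖f‖ := by positivity
          linarith)
        intro h hm
        obtain ⟨k, hk, rfl⟩ := List.mem_map.1 hm
        rw [hbNval]
        split
        · next hk0 =>
            have hcoef : a * (f ↑k + ε) ≤ 0 :=
              mul_nonpos_of_nonneg_of_nonpos hapos.le (by have := hfkneg k hk0; linarith)
            have hfk : -‖f‖ ≤ f ↑k := by have := neg_abs_le (f ↑k); have := hfkM k; linarith
            calc -(a * ‖f‖) = a * (-‖f‖) := by ring
              _ ≤ a * (f ↑k + ε) := mul_le_mul_of_nonneg_left (by linarith) hapos.le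
              _ = (a * (f ↑k + ε)) * 1 := (mul_one _).symm
              _ ≤ (a * (f ↑k + ε)) * φ i k y :=
                  mul_le_mul_of_nonpos_left (hφ01 i k _).2 hcoef
        · have : (0:ℝ) ≤ a * ‖f‖ := by positivity
          linarith
      simp only [ContinuousMap.add_apply]
      rw [abs_le]
      constructor <;> linarith
    · -- vanishing on W i
      intro y hy
      have hz : ∀ k : ↥K, φ i k y = 0 := by
        intro k
        by_contra h
        exact (hO2 i ↑k y (hφO i k y h)) hy
      have h1 : ((T.toList.map bP).foldr (· ⊔ ·) 0) y ≤ 0 := by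
        apply sternfeld_foldSup_le _ _ le_rfl
        intro h hm
        obtain ⟨k, hk, rfl⟩ := List.mem_map.1 hm
        rw [hbPval]
        split <;> simp [hz k]
      have h2 := sternfeld_foldSup_nonneg (T.toList.map bP) y
      have h3 : (0:ℝ) ≤ ((T.toList.map bN).foldr (· ⊓ ·) 0) y := by
        apply sternfeld_foldInf_ge _ _ le_rfl
        intro h hm
        obtain ⟨k, hk, rfl⟩ := List.mem_map.1 hm
        rw [hbNval]
        split <;> simp [hz k]
      have h4 := sternfeld_foldInf_nonpos (T.toList.map bN) y
      simp only [ContinuousMap.add_apply]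
      linarith
    · -- capture
      intro k hkT hik x'' hx''
      subst hik
      have hφ1v : φ (idx k) k ((x'' : Π j, Y j) (idx k)) = 1 := hφ1 (idx k) k rfl x'' hx''
      have hOmem : ((x'' : Π j, Y j) (idx k)) ∈ O (idx k) ↑k := (hDprop k x'' hx'').1
      constructor
      · intro hk0
        have hf3 := (hO3 (idx k) ↑k x'' hOmem).1 hk0
        have h7 := hfkpos k hk0
        have hmem : bP k ∈ T.toList.map bP := List.mem_map_of_mem (Finset.mem_toList.2 hkT)
        have hval : bP k ((x'' : Π j, Y j) (idx k)) = a * (f ↑k - ε) := by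
          rw [hbPval, if_pos hk0, hφ1v, mul_one]
        have h2 : a * (f ↑k - ε) ≤
            ((T.toList.map bP).foldr (· ⊔ ·) 0) ((x'' : Π j, Y j) (idx k)) := by
          rw [← hval]; exact sternfeld_le_foldSup _ _ hmem
        have h3 : (0:ℝ) ≤ ((T.toList.map bN).foldr (· ⊓ ·) 0) ((x'' : Π j, Y j) (idx k)) := by
          apply sternfeld_foldInf_ge _ _ le_rfl
          intro h hm
          obtain ⟨l, hl, rfl⟩ := List.mem_map.1 hm
          by_cases h0 : bN l ((x'' : Π j, Y j) (idx k)) = 0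
          · simp [h0]
          · obtain ⟨hl0, hyO⟩ := hbNO l _ h0
            have h5 := (hO3 (idx k) ↑l x'' hyO).2 hl0
            have h6 := hfkneg l hl0
            linarith
        simp only [ContinuousMap.add_apply]
        linarith
      · intro hk0
        have hf3 := (hO3 (idx k) ↑k x'' hOmem).2 hk0
        have h7 := hfkneg k hk0
        have hmem : bN k ∈ T.toList.map bN := List.mem_map_of_mem (Finset.mem_toList.2 hkT)
        have hval : bN k ((x'' : Π j, Y j) (idx k)) = a * (f ↑k + ε) := by
          rw [hbNval, if_pos hk0, hφ1v, mul_one]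
        have h2 : ((T.toList.map bN).foldr (· ⊓ ·) 0) ((x'' : Π j, Y j) (idx k))
            ≤ a * (f ↑k + ε) := by
          rw [← hval]; exact sternfeld_foldInf_le _ _ hmem
        have h3 : ((T.toList.map bP).foldr (· ⊔ ·) 0) ((x'' : Π j, Y j) (idx k)) ≤ 0 := by
          apply sternfeld_foldSup_le _ _ le_rfl
          intro h hm
          obtain ⟨l, hl, rfl⟩ := List.mem_map.1 hm
          by_cases h0 : bP l ((x'' : Π j, Y j) (idx k)) = 0
          · simp [h0]
          · obtain ⟨hl0, hyO⟩ := hbPO l _ h0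
            have h5 := (hO3 (idx k) ↑l x'' hyO).1 hl0
            have h6 := hfkpos l hl0
            linarith
        simp only [ContinuousMap.add_apply]
        linarith

  choose G hG1 hG2 hG3 hG4 hG5 using hGex
  clear_value a ε
  -- assemble g
  set g0 : C((Σ i, Y i), ℝ) :=
    ⟨fun z => G z.1 z.2, continuous_sigma fun i => (G i).continuous⟩ with hg0def
  have hLg : ∀ x : X, inducedL X g0 x = ∑ i, G i ((x : Π j, Y j) i) := fun x => rfl
  have hsum_ub : ∀ x : X, (∑ i, G i ((x : Π j, Y j) i)) ≤ max 0 (f x) := by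
    intro x
    have h := Finset.sum_le_sum fun i (_ : i ∈ Finset.univ) => hG1 i x
    rw [Finset.sum_const, Finset.card_univ, Fintype.card_fin, nsmul_eq_mul] at h
    have hcast : ((n + 1 : ℕ) : ℝ) = (n : ℝ) + 1 := by push_cast; ring
    rw [hcast] at h
    calc (∑ i, G i ((x : Π j, Y j) i)) ≤ ((n : ℝ) + 1) * (a * max 0 (f x)) := h
      _ = (((n : ℝ) + 1) * a) * max 0 (f x) := by ring
      _ = max 0 (f x) := by rw [ha1, one_mul]
  have hsum_lb : ∀ x : X, min 0 (f x) ≤ ∑ i, G i ((x : Π j, Y j) i) := by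
    intro x
    have h := Finset.sum_le_sum fun i (_ : i ∈ Finset.univ) => hG2 i x
    rw [Finset.sum_const, Finset.card_univ, Fintype.card_fin, nsmul_eq_mul] at h
    have hcast : ((n + 1 : ℕ) : ℝ) = (n : ℝ) + 1 := by push_cast; ring
    rw [hcast] at h
    calc min 0 (f x) = (((n : ℝ) + 1) * a) * min 0 (f x) := by rw [ha1, one_mul]
      _ = ((n : ℝ) + 1) * (a * min 0 (f x)) := by ring
      _ ≤ ∑ i, G i ((x : Π j, Y j) i) := h
  have hcapP : ∀ x : X, 2 * ε ≤ |f x| → 0 ≤ f x →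
      ∃ i, a * (f x - 2 * ε) ≤ G i ((x : Π j, Y j) i) := by
    intro x hxK hx0
    have hxmemK : x ∈ K := hxK
    obtain ⟨k, hkT, hxI⟩ := Set.mem_iUnion₂.1 (hT hxmemK)
    have hxD : x ∈ D k := interior_subset hxI
    have hdist := abs_lt.1 (hDprop k x hxD).2
    by_cases hk0 : 0 ≤ f ↑k
    · refine ⟨idx k, le_trans ?_ ((hG5 (idx k) k hkT rfl x hxD).1 hk0)⟩
      apply mul_le_mul_of_nonneg_left _ hapos.le
      linarith [hdist.1, hdist.2]
    · exfalso
      push_neg at hk0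
      have h2 : 2 * ε ≤ |f ↑k| := k.2
      rw [abs_of_neg hk0] at h2
      linarith [hdist.1, hdist.2]
  have hcapN : ∀ x : X, 2 * ε ≤ |f x| → f x < 0 →
      ∃ i, G i ((x : Π j, Y j) i) ≤ a * (f x + 2 * ε) := by
    intro x hxK hx0
    have hxmemK : x ∈ K := hxK
    obtain ⟨k, hkT, hxI⟩ := Set.mem_iUnion₂.1 (hT hxmemK)
    have hxD : x ∈ D k := interior_subset hxI
    have hdist := abs_lt.1 (hDprop k x hxD).2
    by_cases hk0 : f ↑k < 0
    · refine ⟨idx k, le_trans ((hG5 (idx k) k hkT rfl x hxD).2 hk0) ?_⟩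
      apply mul_le_mul_of_nonneg_left _ hapos.le
      linarith [hdist.1, hdist.2]
    · exfalso
      push_neg at hk0
      have h2 : 2 * ε ≤ |f ↑k| := k.2
      rw [abs_of_nonneg hk0] at h2
      linarith [hdist.1, hdist.2]
  have hna' : (1 : ℝ) - a = (n : ℝ) * a := by
    have : (n : ℝ) * a + a = 1 := by rw [← ha1]; ring
    linarith
  have hpt : ∀ x : X, |f x - ∑ i, G i ((x : Π j, Y j) i)| ≤
      max ((n : ℝ) * a * ‖f‖ + 2 * a * ε) (2 * ε) := by
    intro x
    have hub := hsum_ub x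
    have hlb := hsum_lb x
    set S : ℝ := ∑ i, G i ((x : Π j, Y j) i) with hSdef
    have hm0 : (0 : ℝ) ≤ max ((n : ℝ) * a * ‖f‖ + 2 * a * ε) (2 * ε) :=
      le_trans (by linarith [hεpos]) (le_max_right _ _)
    rcases le_or_gt (2 * ε) (|f x|) with hK' | hsmall
    · rcases le_or_gt 0 (f x) with hpos | hneg
      · obtain ⟨i₀, hi₀⟩ := hcapP x hK' hpos
        have hsplit : G i₀ ((x : Π j, Y j) i₀) +
            ∑ i ∈ Finset.univ.erase i₀, G i ((x : Π j, Y j) i)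
            = S := by
          rw [hSdef]
          exact Finset.add_sum_erase _ (fun i => G i ((x : Π j, Y j) i)) (Finset.mem_univ i₀)
        have herase : (0 : ℝ) ≤ ∑ i ∈ Finset.univ.erase i₀, G i ((x : Π j, Y j) i) := by
          apply Finset.sum_nonneg
          intro j _
          have h2 := hG2 j x
          rw [min_eq_left hpos, mul_zero] at h2
          exact h2
        have hfM : f x ≤ ‖f‖ := le_trans (le_abs_self _) (hfbd x)
        have hmax : max 0 (f x) = f x := max_eq_right hpos
        rw [hmax] at hub
        have h1 : (n : ℝ) * a * f x ≤ (n : ℝ) * a * ‖f‖ :=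
          mul_le_mul_of_nonneg_left hfM (mul_nonneg hnpos.le hapos.le)
        have h5 : (1 - a) * f x ≤ (n : ℝ) * a * ‖f‖ := by rw [hna']; exact h1
        rw [abs_le]
        constructor
        · linarith
        · have h3 : a * (f x - 2 * ε) ≤ S := by
            rw [← hsplit]; linarith
          have h6 : f x - S ≤ (n : ℝ) * a * ‖f‖ + 2 * a * ε := by
            linarith [h3, h5]
          exact le_trans h6 (le_max_left _ _)
      · obtain ⟨i₀, hi₀⟩ := hcapN x hK' hneg
        have hsplit : G i₀ ((x : Π j, Y j) i₀) +
            ∑ i ∈ Finset.univ.erase i₀, G i ((x : Π j, Y j) i)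
            = S := by
          rw [hSdef]
          exact Finset.add_sum_erase _ (fun i => G i ((x : Π j, Y j) i)) (Finset.mem_univ i₀)
        have herase : (∑ i ∈ Finset.univ.erase i₀, G i ((x : Π j, Y j) i)) ≤ 0 := by
          apply Finset.sum_nonpos
          intro j _
          have h2 := hG1 j x
          rw [max_eq_left hneg.le, mul_zero] at h2
          exact h2
        have hfM : -‖f‖ ≤ f x := by have := neg_abs_le (f x); have := hfbd x; linarith
        have hmin : min 0 (f x) = f x := min_eq_right hneg.le
        rw [hmin] at hlb
        have h1 : (n : ℝ) * a * (-‖f‖) ≤ (n : ℝ) * a * f x :=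
          mul_le_mul_of_nonneg_left hfM (mul_nonneg hnpos.le hapos.le)
        have h5 : -((n : ℝ) * a * ‖f‖) ≤ (1 - a) * f x := by rw [hna']; linarith
        rw [abs_le]
        constructor
        · have h3 : S ≤ a * (f x + 2 * ε) := by
            rw [← hsplit]; linarith
          have h6 : -((n : ℝ) * a * ‖f‖ + 2 * a * ε) ≤ f x - S := by
            linarith [h3, h5]
          exact le_trans (by have := le_max_left ((n : ℝ) * a * ‖f‖ + 2 * a * ε) (2 * ε); linarith) h6
        · linarith
    · have e1 : max 0 (f x) ≤ |f x| := max_le (abs_nonneg _) (le_abs_self _)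
      have e2 : -|f x| ≤ min 0 (f x) := le_min (neg_nonpos.2 (abs_nonneg _)) (neg_abs_le _)
      have e3 : min 0 (f x) + max 0 (f x) = 0 + f x := min_add_max 0 (f x)
      rw [abs_le]
      constructor
      · have := le_max_right ((n : ℝ) * a * ‖f‖ + 2 * a * ε) (2 * ε)
        linarith
      · have := le_max_right ((n : ℝ) * a * ‖f‖ + 2 * a * ε) (2 * ε)
        linarith
  refine ⟨g0, ?_, ?_, ?_, ?_⟩
  · -- vanishing on Z'
    rintro ⟨i, y⟩ hz
    exact hG4 i y hz
  · -- vanishing of f - L g on X'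
    intro x hx
    have h0 := hf' x hx
    have hub := hsum_ub x
    have hlb := hsum_lb x
    rw [h0] at hub hlb
    simp only [max_self, min_self] at hub hlb
    rw [hLg x, h0]
    linarith
  · -- norm of g
    rw [ContinuousMap.norm_le _ (by positivity)]
    rintro ⟨i, y⟩
    rw [Real.norm_eq_abs]
    calc |g0 ⟨i, y⟩| = |G i y| := rfl
      _ ≤ a * ‖f‖ := hG3 i y
      _ = ‖f‖ / ((n : ℝ) + 1) := by rw [hadef]; ring
  · -- the main estimate
    have hb0 : (0 : ℝ) ≤ max ((n : ℝ) * a * ‖f‖ + 2 * a * ε) (2 * ε) :=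
      le_trans (by linarith [hεpos]) (le_max_right _ _)
    have hnorm : ‖f - inducedL X g0‖ ≤ max ((n : ℝ) * a * ‖f‖ + 2 * a * ε) (2 * ε) := by
      rw [ContinuousMap.norm_le _ hb0]
      intro x
      rw [ContinuousMap.sub_apply, Real.norm_eq_abs, hLg x]
      exact hpt x
    refine lt_of_le_of_lt hnorm ?_
    have hRHS : (n : ℝ) * a * c = ((n : ℝ) / ((n : ℝ) + 1)) * c := by
      rw [hadef]; ring
    rw [← hRHS]
    apply max_lt
    · have h1 : 2 * ε < (n : ℝ) * (c - ‖f‖) := by linarith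
      have h2 : a * (2 * ε) < a * ((n : ℝ) * (c - ‖f‖)) := mul_lt_mul_of_pos_left h1 hapos
      linarith [h2]
    · linarith [hε2, hεpos]
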